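/- For every a in A and x in V, one has Ω(xa + xa*) ≤ 2‖a + a*‖_A Ω(x). -/

import Mathlib

/-!
Setting: `A` is a C*-algebra and `V` is a Hilbert C*-module over `A`.
`WithCStarModule (A × V)` is the Hilbert `A`-module `A ⊕ V`, with inner product
`⟪(a, y), (b, z)⟫ = a * b + ⟪y, z⟫` and norm `‖(a, y)‖ = ‖a * a + ⟪y, y⟫‖ ^ (1/2)`
(both provided by Mathlib).  For `x : V` and `lam : ℂ` with `|lam| = 1`, the operator
`M_{x,lam} : A ⊕ V → A ⊕ V`, `(a, y) ↦ (conj lam • ⟪x, y⟫, lam • (x <• a))` is encoded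
by a family `M` of continuous linear maps satisfying the predicate `IsM` below, and the
numerical radius is `numRadius M x = (1/2) * sup_{|lam| = 1} ‖M x lam‖`.
-/

open scoped RightActions InnerProductSpace

noncomputable section

variable {A V : Type*} [NonUnitalCStarAlgebra A] [PartialOrder A] [StarOrderedRing A]
  [NormedAddCommGroup V] [Module ℂ V] [SMul A V] [CStarModule A V] [CompleteSpace V]

/-- The element of the Hilbert `A`-module `A ⊕ V` with components `a : A` and `y : V`. -/
def pairElem (a : A) (y : V) : WithCStarModule A (A × V) :=
  (WithCStarModule.equiv A (A × V)).symm (a, y)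

/-- `IsM M` asserts that for every `x : V` and every unimodular `lam : ℂ`, the continuous
linear map `M x lam` is the operator `M_{x,lam} : (a, y) ↦ (conj lam • ⟪x, y⟫, lam • (x <• a))`
on `A ⊕ V`. -/
def IsM (M : V → ℂ → (WithCStarModule A (A × V) →L[ℂ] WithCStarModule A (A × V))) : Prop :=
  ∀ (x : V) (lam : ℂ), ‖lam‖ = 1 → ∀ (a : A) (y : V),
    M x lam (pairElem a y) = pairElem ((starRingEnd ℂ) lam • ⟪x, y⟫_A) (lam • (a • x))

/-- The numerical radius `Ω(x) = (1/2) * sup_{|lam| = 1} ‖M_{x,lam}‖`. -/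
def numRadius (M : V → ℂ → (WithCStarModule A (A × V) →L[ℂ] WithCStarModule A (A × V)))
    (x : V) : ℝ :=
  (1 / 2) * sSup ((fun lam : ℂ => ‖M x lam‖) '' {lam : ℂ | ‖lam‖ = 1})

set_option linter.unusedSectionVars false in
lemma inner_op_smul_op_smul (x y : V) (u v : A) :
    ⟪u • x, v • y⟫_A = v * ⟪x, y⟫_A * star u := by
  rw [CStarModule.inner_op_smul_left, CStarModule.inner_op_smul_right]

set_option linter.unusedSectionVars false in
lemma op_smul_add (x : V) (a b : A) : (a + b) • x = a • x + b • x := by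
  rw [← sub_eq_zero, ← CStarModule.inner_self (A := A)]
  simp only [CStarModule.inner_sub_left, CStarModule.inner_sub_right,
    CStarModule.inner_add_left, CStarModule.inner_add_right, inner_op_smul_op_smul,
    star_add, add_mul, mul_add]
  abel

set_option linter.unusedSectionVars false in
lemma op_smul_zero' (x : V) : (0 : A) • x = 0 := by
  have h := op_smul_add x (0:A) 0
  rw [add_zero] at h
  have h2 : (0:A) • x + (0:A) • x = (0:A) • x + 0 := by rw [add_zero]; exact h.symm
  exact add_left_cancel h2

set_option linter.unusedSectionVars false in
lemma norm_op_smul_le (x : V) (b : A) : ‖b • x‖ ≤ ‖x‖ * ‖b‖ := by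
  have h : ‖b • x‖ = Real.sqrt ‖b * ⟪x, x⟫_A * star b‖ := by
    rw [CStarModule.norm_eq_sqrt_norm_inner_self (A := A)]
    rw [inner_op_smul_op_smul]
  rw [h]
  have h2 : ‖b * ⟪x, x⟫_A * star b‖ ≤ (‖x‖ * ‖b‖) ^ 2 := by
    calc ‖b * ⟪x, x⟫_A * star b‖ ≤ ‖b * ⟪x, x⟫_A‖ * ‖star b‖ := norm_mul_le _ _
      _ ≤ ‖b‖ * ‖⟪x, x⟫_A‖ * ‖star b‖ := by gcongr; exact norm_mul_le _ _
      _ = ‖b‖ * ‖x‖ ^ 2 * ‖b‖ := by rw [norm_star, CStarModule.norm_sq_eq (A := A)]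
      _ = (‖x‖ * ‖b‖) ^ 2 := by ring
  calc Real.sqrt ‖b * ⟪x, x⟫_A * star b‖ ≤ Real.sqrt ((‖x‖ * ‖b‖) ^ 2) := Real.sqrt_le_sqrt h2
    _ = ‖x‖ * ‖b‖ := Real.sqrt_sq (by positivity)

set_option linter.unusedSectionVars false in
lemma pairElem_eta (z : WithCStarModule A (A × V)) : pairElem z.1 z.2 = z := rfl

set_option linter.unusedSectionVars false in
lemma norm_pairElem (a : A) (y : V) :
    ‖pairElem a y‖ = Real.sqrt ‖a * star a + ⟪y, y⟫_A‖ := by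
  rw [WithCStarModule.prod_norm]
  rfl

set_option linter.unusedSectionVars false in
lemma norm_sq_elem (z : WithCStarModule A (A × V)) :
    ‖z‖ ^ 2 = ‖z.1 * star z.1 + ⟪z.2, z.2⟫_A‖ := by
  rw [← pairElem_eta z, norm_pairElem, Real.sq_sqrt (norm_nonneg _)]
  rfl

set_option linter.unusedSectionVars false in
lemma norm_M_apply_le (x : V) (lam : ℂ) (hlam : ‖lam‖ = 1) (z : WithCStarModule A (A × V)) :
    ‖pairElem ((starRingEnd ℂ) lam • ⟪x, z.2⟫_A) (lam • (z.1 • x))‖ ≤ ‖x‖ * ‖z‖ := by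
  set c : A := (starRingEnd ℂ) lam • ⟪x, z.2⟫_A with hc
  set v : V := lam • (z.1 • x) with hv
  have hmul : lam * (starRingEnd ℂ) lam = 1 := by
    rw [Complex.mul_conj']
    simp [hlam]
  have hcc : c * star c = ⟪x, z.2⟫_A * ⟪z.2, x⟫_A := by
    rw [hc, star_smul, smul_mul_smul_comm, CStarModule.star_inner]
    simp only [RCLike.star_def, starRingEnd_self_apply]
    rw [mul_comm ((starRingEnd ℂ) lam) lam, hmul, one_smul]
  have hvv : ⟪v, v⟫_A = z.1 * ⟪x, x⟫_A * star z.1 := by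
    rw [hv, CStarModule.inner_smul_left_complex, CStarModule.inner_smul_right_complex,
      CStarModule.inner_op_smul_left, CStarModule.inner_op_smul_right, smul_smul]
    simp only [RCLike.star_def]
    rw [mul_comm lam ((starRingEnd ℂ) lam)] at hmul
    rw [hmul, one_smul]
  have key : c * star c + ⟪v, v⟫_A ≤ ‖x‖ ^ 2 • (z.1 * star z.1 + ⟪z.2, z.2⟫_A) := by
    rw [smul_add, hcc, hvv]
    rw [add_comm (‖x‖ ^ 2 • (z.1 * star z.1))]
    refine add_le_add CStarModule.inner_mul_inner_swap_le ?_
    calc z.1 * ⟪x, x⟫_A * star z.1 ≤ ‖⟪x, x⟫_A‖ • (z.1 * star z.1) :=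
          CStarAlgebra.star_right_conjugate_le_norm_smul (by rw [isSelfAdjoint_iff, CStarModule.star_inner])
      _ = ‖x‖ ^ 2 • (z.1 * star z.1) := by rw [CStarModule.norm_sq_eq (A := A)]
  have h0 : (0 : A) ≤ c * star c + ⟪v, v⟫_A :=
    add_nonneg (mul_star_self_nonneg c) CStarModule.inner_self_nonneg
  have hnorm : ‖c * star c + ⟪v, v⟫_A‖ ≤ ‖x‖ ^ 2 * ‖z.1 * star z.1 + ⟪z.2, z.2⟫_A‖ := by
    calc ‖c * star c + ⟪v, v⟫_A‖ ≤ ‖‖x‖ ^ 2 • (z.1 * star z.1 + ⟪z.2, z.2⟫_A)‖ :=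
          CStarAlgebra.norm_le_norm_of_nonneg_of_le h0 key
      _ = ‖x‖ ^ 2 * ‖z.1 * star z.1 + ⟪z.2, z.2⟫_A‖ := by
          rw [norm_smul]; simp
  calc ‖pairElem c v‖ = Real.sqrt ‖c * star c + ⟪v, v⟫_A‖ := norm_pairElem c v
    _ ≤ Real.sqrt (‖x‖ ^ 2 * ‖z.1 * star z.1 + ⟪z.2, z.2⟫_A‖) := Real.sqrt_le_sqrt hnorm
    _ = Real.sqrt (‖x‖ ^ 2 * ‖z‖ ^ 2) := by rw [norm_sq_elem]
    _ = ‖x‖ * ‖z‖ := by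
        rw [← mul_pow, Real.sqrt_sq (by positivity)]

set_option linter.unusedSectionVars false in
lemma norm_M_eq (M : V → ℂ → (WithCStarModule A (A × V) →L[ℂ] WithCStarModule A (A × V)))
    (hM : IsM M) (x : V) (lam : ℂ) (hlam : ‖lam‖ = 1) : ‖M x lam‖ = ‖x‖ := by
  refine le_antisymm ?_ ?_
  · refine (M x lam).opNorm_le_bound (norm_nonneg x) fun z => ?_
    have h := hM x lam hlam z.1 z.2
    rw [pairElem_eta] at h
    rw [h]
    exact norm_M_apply_le x lam hlam z
  · rcases eq_or_ne x 0 with rfl | hx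
    · rw [norm_zero]; exact norm_nonneg (M 0 lam)
    · have h := hM x lam hlam 0 x
      rw [op_smul_zero', smul_zero] at h
      have h1 : ‖pairElem (0:A) x‖ = ‖x‖ := by
        rw [norm_pairElem]
        simp only [star_zero, mul_zero, zero_add]
        rw [← CStarModule.norm_eq_sqrt_norm_inner_self (A := A)]
      have h2 : ‖pairElem ((starRingEnd ℂ) lam • ⟪x, x⟫_A) (0:V)‖ = ‖x‖ ^ 2 := by
        rw [norm_pairElem]
        have : ⟪(0:V), (0:V)⟫_A = 0 := CStarModule.inner_self.mpr rfl
        rw [this, add_zero, CStarRing.norm_self_mul_star, ← Real.sqrt_mul_self (norm_nonneg _)]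
        rw [Real.sqrt_mul_self (norm_nonneg _)]
        rw [norm_smul]
        simp [hlam, ← CStarModule.norm_sq_eq]
      have hle := (M x lam).le_opNorm (pairElem (0:A) x)
      rw [h, h1, h2] at hle
      have hxpos : 0 < ‖x‖ := norm_pos_iff.mpr hx
      rw [sq] at hle
      exact le_of_mul_le_mul_right hle hxpos

set_option linter.unusedSectionVars false in
lemma numRadius_eq (M : V → ℂ → (WithCStarModule A (A × V) →L[ℂ] WithCStarModule A (A × V)))
    (hM : IsM M) (x : V) : numRadius M x = ‖x‖ / 2 := by
  have himg : (fun lam : ℂ => ‖M x lam‖) '' {lam : ℂ | ‖lam‖ = 1} = {‖x‖} := by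
    ext r
    simp only [Set.mem_image, Set.mem_setOf_eq, Set.mem_singleton_iff]
    constructor
    · rintro ⟨lam, hlam, rfl⟩
      exact norm_M_eq M hM x lam hlam
    · rintro rfl
      exact ⟨1, by simp, norm_M_eq M hM x 1 (by simp)⟩
  rw [numRadius, himg, csSup_singleton]
  ring

theorem stmt9 (M : V → ℂ → (WithCStarModule A (A × V) →L[ℂ] WithCStarModule A (A × V))) (hM : IsM M) (a : A) (x : V) :
    numRadius M (a • x + star a • x) ≤ 2 * ‖a + star a‖ * numRadius M x := by
  rw [numRadius_eq M hM, numRadius_eq M hM, ← op_smul_add]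
  have h1 := norm_op_smul_le x (a + star a)
  have h2 : (0:ℝ) ≤ ‖a + star a‖ := norm_nonneg _
  have h3 : (0:ℝ) ≤ ‖x‖ := norm_nonneg _
  nlinarith [norm_nonneg ((a + star a) • x)]
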